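/- The ad-invariant bilinear form ⟨x,y⟩_λ = Σ_{i=1}^m (λ_i/2)(x_i y_i + x_{m+i} y_{m+i}) + x_0 y_1 + y_0 x_1 on the oscillator Lie algebra osc_λ (with λ_i > 0) is non-degenerate and has Lorentzian signature, i.e. signature (2m+1, 1). -/

import Mathlib

/-- The underlying vector space of the oscillator algebra:
components `(a, b, t₀, t₁)` corresponding to `Σ aᵢ eᵢ + Σ bᵢ e_{m+i} + t₀ ε₀ + t₁ ε₁`. -/
def OscV (m : ℕ) : Type := (Fin m → ℝ) × (Fin m → ℝ) × ℝ × ℝ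

instance (m : ℕ) : AddCommGroup (OscV m) :=
  inferInstanceAs (AddCommGroup ((Fin m → ℝ) × (Fin m → ℝ) × ℝ × ℝ))

noncomputable instance (m : ℕ) : Module ℝ (OscV m) :=
  inferInstanceAs (Module ℝ ((Fin m → ℝ) × (Fin m → ℝ) × ℝ × ℝ))

/-- The Lorentzian bilinear form `⟨x,y⟩_λ`. -/
noncomputable def oscForm {m : ℕ} (lam : Fin m → ℝ) (x y : OscV m) : ℝ :=
  (∑ i, lam i / 2 * (x.1 i * y.1 i + x.2.1 i * y.2.1 i))
    + x.2.2.1 * y.2.2.2 + y.2.2.1 * x.2.2.2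

lemma oscForm_comm {m : ℕ} (lam : Fin m → ℝ) (x y : OscV m) :
    oscForm lam x y = oscForm lam y x := by
  unfold oscForm
  rw [show (∑ i, lam i / 2 * (x.1 i * y.1 i + x.2.1 i * y.2.1 i))
      = ∑ i, lam i / 2 * (y.1 i * x.1 i + y.2.1 i * x.2.1 i) from
    Finset.sum_congr rfl fun i _ => by ring]
  ring

lemma oscForm_add_left {m : ℕ} (lam : Fin m → ℝ) (x x' y : OscV m) :
    oscForm lam (x + x') y = oscForm lam x y + oscForm lam x' y := by
  obtain ⟨xa, xb, x0, x1⟩ := x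
  obtain ⟨xa', xb', x0', x1'⟩ := x'
  obtain ⟨ya, yb, y0, y1⟩ := y
  show (∑ i, lam i / 2 * ((xa i + xa' i) * ya i + (xb i + xb' i) * yb i))
      + (x0 + x0') * y1 + y0 * (x1 + x1') = _
  rw [show (∑ i, lam i / 2 * ((xa i + xa' i) * ya i + (xb i + xb' i) * yb i))
      = (∑ i, lam i / 2 * (xa i * ya i + xb i * yb i))
        + ∑ i, lam i / 2 * (xa' i * ya i + xb' i * yb i) from by
    rw [← Finset.sum_add_distrib]; exact Finset.sum_congr rfl fun i _ => by ring]
  show _ = ((∑ i, lam i / 2 * (xa i * ya i + xb i * yb i)) + x0 * y1 + y0 * x1)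
    + ((∑ i, lam i / 2 * (xa' i * ya i + xb' i * yb i)) + x0' * y1 + y0 * x1')
  ring

lemma oscForm_smul_left {m : ℕ} (lam : Fin m → ℝ) (c : ℝ) (x y : OscV m) :
    oscForm lam (c • x) y = c * oscForm lam x y := by
  obtain ⟨xa, xb, x0, x1⟩ := x
  obtain ⟨ya, yb, y0, y1⟩ := y
  show (∑ i, lam i / 2 * ((c * xa i) * ya i + (c * xb i) * yb i))
      + (c * x0) * y1 + y0 * (c * x1)
    = c * ((∑ i, lam i / 2 * (xa i * ya i + xb i * yb i)) + x0 * y1 + y0 * x1)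
  rw [show (∑ i, lam i / 2 * ((c * xa i) * ya i + (c * xb i) * yb i))
      = c * ∑ i, lam i / 2 * (xa i * ya i + xb i * yb i) from by
    rw [Finset.mul_sum]; exact Finset.sum_congr rfl fun i _ => by ring]
  ring

/-- `oscForm` packaged as a bilinear map. -/
noncomputable def oscB {m : ℕ} (lam : Fin m → ℝ) : OscV m →ₗ[ℝ] OscV m →ₗ[ℝ] ℝ :=
  LinearMap.mk₂ ℝ (oscForm lam)
    (fun x x' y => oscForm_add_left lam x x' y)
    (fun c x y => oscForm_smul_left lam c x y)
    (fun x y y' => by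
      rw [oscForm_comm lam x (y + y'), oscForm_add_left, oscForm_comm lam y x,
        oscForm_comm lam y' x])
    (fun c x y => by
      rw [oscForm_comm lam x (c • y), oscForm_smul_left, oscForm_comm lam y x]
      rfl)

/-- The orthonormalizing family of vectors. -/
noncomputable def oscV {m : ℕ} (lam : Fin m → ℝ) (i : Fin (2 * m + 2)) : OscV m :=
  (if h : (i : ℕ) < m then (Pi.single ⟨i, h⟩ (Real.sqrt (2 / lam ⟨i, h⟩)), 0, 0, 0)
  else if h2 : (i : ℕ) < 2 * m then
    (0, Pi.single ⟨(i : ℕ) - m, by omega⟩ (Real.sqrt (2 / lam ⟨(i : ℕ) - m, by omega⟩)), 0, 0)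
  else if _h3 : (i : ℕ) = 2 * m then (0, 0, Real.sqrt 2 / 2, Real.sqrt 2 / 2)
  else (0, 0, Real.sqrt 2 / 2, -(Real.sqrt 2 / 2)) : (Fin m → ℝ) × (Fin m → ℝ) × ℝ × ℝ)

lemma osc_single_sum {m : ℕ} (lam : Fin m → ℝ) (a b : Fin m) (s t : ℝ) :
    (∑ k, lam k / 2 * ((Pi.single a s : Fin m → ℝ) k * (Pi.single b t : Fin m → ℝ) k))
      = if a = b then lam a / 2 * (s * t) else 0 := by
  simp only [Pi.single_apply, mul_ite, ite_mul, mul_zero, zero_mul]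
  by_cases hab : a = b
  · subst hab
    rw [if_pos rfl]
    rw [Finset.sum_eq_single a (fun k _ hk => by simp [hk]) (by simp)]
    simp
  · rw [if_neg hab, Finset.sum_eq_zero]
    intro k _
    by_cases h1 : k = a <;> by_cases h2 : k = b <;> simp_all

lemma oscV_gram {m : ℕ} (lam : Fin m → ℝ) (hlam : ∀ i, 0 < lam i) (i j : Fin (2 * m + 2)) :
    oscForm lam (oscV lam i) (oscV lam j) =
      if i = j then (if (i : ℕ) < 2 * m + 1 then 1 else -1) else 0 := by
  have hs2 : Real.sqrt 2 / 2 * (Real.sqrt 2 / 2) = 1 / 2 := by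
    rw [div_mul_div_comm, Real.mul_self_sqrt (by norm_num)]; norm_num
  have hsq : ∀ k : Fin m, Real.sqrt (2 / lam k) * Real.sqrt (2 / lam k) = 2 / lam k := by
    intro k; have := hlam k; exact Real.mul_self_sqrt (by positivity)
  rcases eq_or_ne i j with rfl | hne
  · rw [if_pos rfl]
    unfold oscV oscForm
    split_ifs with h1 h2 h3 h4 <;>
      simp only [Pi.zero_apply, mul_zero, zero_mul, add_zero, zero_add, neg_mul, mul_neg,
        neg_zero, Finset.sum_const_zero, hs2]
    · rw [osc_single_sum, if_pos rfl, hsq]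
      have := (hlam ⟨i, h1⟩).ne'
      field_simp
    · omega
    · rw [osc_single_sum, if_pos rfl, hsq]
      have := (hlam ⟨(i : ℕ) - m, by omega⟩).ne'
      field_simp
    · omega
    · norm_num
    · omega
    · omega
    · norm_num
  · rw [if_neg hne]
    have hne' : (i : ℕ) ≠ (j : ℕ) := fun h => hne (Fin.ext h)
    unfold oscV oscForm
    split_ifs <;>
      simp only [Pi.zero_apply, mul_zero, zero_mul, add_zero, zero_add, neg_mul, mul_neg,
        neg_zero, neg_neg, Finset.sum_const_zero, hs2] <;>
      first
      | omega
      | (rw [osc_single_sum, if_neg (by simp only [Fin.mk.injEq]; omega)])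
      | norm_num

/-- for `λᵢ > 0`, the ad-invariant form `⟨·,·⟩_λ` on `osc_λ` is
non-degenerate and has Lorentzian signature `(2m+1, 1)`: there is a basis in which
it is diagonal with `2m+1` entries equal to `+1` and one entry equal to `-1`. -/
theorem oscForm_nondegenerate_lorentzian {m : ℕ} (lam : Fin m → ℝ)
    (hlam : ∀ i, 0 < lam i) :
    (∀ x : OscV m, (∀ y : OscV m, oscForm lam x y = 0) → x = 0) ∧
    ∃ b : Module.Basis (Fin (2 * m + 2)) ℝ (OscV m),
      ∀ i j, oscForm lam (b i) (b j) =
        if i = j then (if (i : ℕ) < 2 * m + 1 then 1 else -1) else 0 := by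
  constructor
  · rintro ⟨xa, xb, x0, x1⟩ hx
    have ha : ∀ i : Fin m, xa i = 0 := by
      intro i
      have h := hx ((Pi.single i 1 : Fin m → ℝ), 0, 0, 0)
      simp only [oscForm, Pi.zero_apply, mul_zero, zero_mul, add_zero, zero_add,
        Pi.single_apply, mul_ite, mul_one, Finset.sum_ite_eq', Finset.mem_univ,
        if_true] at h
      have hl := (hlam i).ne'
      field_simp at h
      exact (mul_eq_zero.mp (h.trans (mul_zero 2))).resolve_left hl
    have hb : ∀ i : Fin m, xb i = 0 := by
      intro i
      have h := hx (0, (Pi.single i 1 : Fin m → ℝ), 0, 0)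
      simp only [oscForm, Pi.zero_apply, mul_zero, zero_mul, add_zero, zero_add,
        Pi.single_apply, mul_ite, mul_one, Finset.sum_ite_eq', Finset.mem_univ,
        if_true] at h
      have hl := (hlam i).ne'
      field_simp at h
      exact (mul_eq_zero.mp (h.trans (mul_zero 2))).resolve_left hl
    have h0 : x0 = 0 := by
      have h := hx (0, 0, 0, 1)
      simpa [oscForm] using h
    have h1 : x1 = 0 := by
      have h := hx (0, 0, 1, 0)
      simpa [oscForm] using h
    have : xa = 0 := funext ha
    have : xb = 0 := funext hb
    subst h0 h1
    rw [funext ha, funext hb]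
    rfl
  · haveI : Nonempty (Fin (2 * m + 2)) := ⟨⟨0, by omega⟩⟩
    have eqv : OscV m ≃ₗ[ℝ] ((Fin m → ℝ) × (Fin m → ℝ) × ℝ × ℝ) :=
      LinearEquiv.refl ℝ ((Fin m → ℝ) × (Fin m → ℝ) × ℝ × ℝ)
    haveI : FiniteDimensional ℝ (OscV m) := Module.Finite.equiv eqv.symm
    have hrank : Module.finrank ℝ (OscV m) = 2 * m + 2 := by
      rw [eqv.finrank_eq]
      simp [Module.finrank_prod, Module.finrank_pi]
      ring
    have hgram := oscV_gram lam hlam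
    have hind : LinearIndependent ℝ (oscV lam) := by
      apply LinearMap.linearIndependent_of_isOrthoᵢ (B := oscB lam)
      · intro a b hab
        show oscForm lam (oscV lam a) (oscV lam b) = 0
        rw [hgram a b, if_neg hab]
      · intro a h
        have : oscForm lam (oscV lam a) (oscV lam a) = 0 := h
        rw [hgram a a, if_pos rfl] at this
        split_ifs at this <;> norm_num at this
    have hcard : Fintype.card (Fin (2 * m + 2)) = Module.finrank ℝ (OscV m) := by
      rw [hrank, Fintype.card_fin]
    refine ⟨basisOfLinearIndependentOfCardEqFinrank hind hcard, fun i j => ?_⟩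
    rw [show basisOfLinearIndependentOfCardEqFinrank hind hcard i = oscV lam i from
        congrFun (coe_basisOfLinearIndependentOfCardEqFinrank hind hcard) i,
      show basisOfLinearIndependentOfCardEqFinrank hind hcard j = oscV lam j from
        congrFun (coe_basisOfLinearIndependentOfCardEqFinrank hind hcard) j]
    exact hgram i j
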